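/- arXiv:2304.07703 — 5 statements merged into one kernel-verified Lean document; each statement's English description precedes it below -/
import Mathlib

section
/- Let S be a countably infinite set, t₀ > 0, and c : S × S → [0,∞) symmetric (c(x,y) = c(y,x)) with c(x,x) = 0 for all x. Let (Ω, P) be a probability space and, for each unordered pair {x,y} of distinct points of S, let X_{x,y} : Ω → {0,1} be a measurable map with P(X_{x,y} = 1) = 1 − exp(−c(x,y)·t₀), the family (X_{x,y})_{ {x,y} } being independent. If for P-almost every ω every connected component of the simple graph on S with edge set {{x,y} : x ≠ y, X_{x,y}(ω) = 1} is finite, then ∑_{y∈S} c(x,y) < ∞ for every x ∈ S. -/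
open MeasureTheory ProbabilityTheory Filter

/-- Elementary inequality: if `0 ≤ v` and `exp (-v) > 1/2` then `v ≤ 2 * (1 - exp (-v))`. -/
lemma aux_ineq {v : ℝ} (hv : 0 ≤ v) (h : (1:ℝ)/2 < Real.exp (-v)) :
    v ≤ 2 * (1 - Real.exp (-v)) := by
  have h1 : v + 1 ≤ Real.exp v := Real.add_one_le_exp v
  have h2 : Real.exp (-v) * Real.exp v = 1 := by
    rw [← Real.exp_add]; simp
  nlinarith [Real.exp_pos v, Real.exp_pos (-v)]

/-- If, for some `t₀ > 0`, the random graph on a countably infinite set `S`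
obtained by opening the edge `{x,y}` with probability `1 - exp(-c(x,y) t₀)`, independently over
unordered pairs, almost surely has only finite connected components, then
`∑_y c(x,y) < ∞` for every `x`. -/
theorem stmt_0 {S : Type*} [Countable S] [Infinite S]
    {Ω : Type*} [MeasurableSpace Ω] (P : Measure Ω) [IsProbabilityMeasure P]
    (t₀ : ℝ) (ht₀ : 0 < t₀)
    (c : S → S → ℝ) (hc_nonneg : ∀ x y, 0 ≤ c x y)
    (hc_symm : ∀ x y, c x y = c y x) (hc_diag : ∀ x, c x x = 0)
    (X : Sym2 S → Ω → Bool)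
    (hX_meas : ∀ p : Sym2 S, ¬ p.IsDiag → Measurable (X p))
    (hX_law : ∀ x y : S, x ≠ y →
      P {ω | X s(x, y) ω = true} = ENNReal.ofReal (1 - Real.exp (-(c x y * t₀))))
    (hindep : iIndepFun
      (fun p : {p : Sym2 S // ¬ p.IsDiag} => X p.1) P)
    (hfin : ∀ᵐ ω ∂P, ∀ x : S,
      {y : S | (SimpleGraph.fromRel (fun a b => X s(a, b) ω = true)).Reachable x y}.Finite) :
    ∀ x : S, Summable (fun y => c x y) := by
  classical
  intro x
  by_contra hns
  -- An enumeration of `S \ {x}`.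
  haveI : Infinite (↥({x}ᶜ : Set S)) :=
    Set.infinite_coe_iff.mpr ((Set.finite_singleton x).infinite_compl)
  obtain ⟨d⟩ := (nonempty_denumerable_iff (α := ↥({x}ᶜ : Set S))).mpr
    ⟨inferInstance, inferInstance⟩
  haveI := d
  let e : ℕ ≃ ↥({x}ᶜ : Set S) := (Denumerable.eqv (↥({x}ᶜ : Set S))).symm
  have hne : ∀ n, ((e n : S)) ≠ x := fun n => (e n).2
  -- the non-diagonal pairs {x, e n}
  have hdiag : ∀ n, ¬ (s(x, (e n : S))).IsDiag := by
    intro n h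
    exact hne n (Sym2.mk_isDiag_iff.mp h).symm
  let ι : ℕ → {p : Sym2 S // ¬ p.IsDiag} := fun n => ⟨s(x, (e n : S)), hdiag n⟩
  have hι_inj : Function.Injective ι := by
    intro a b h
    have h' : s(x, (e a : S)) = s(x, (e b : S)) := congrArg Subtype.val h
    exact e.injective (Subtype.ext (Sym2.congr_right.mp h'))
  -- the events
  set s : ℕ → Set Ω := fun n => X (ι n).1 ⁻¹' {true} with hs_def
  have hmeas : ∀ n, MeasurableSet (s n) :=
    fun n => (hX_meas _ (ι n).2) (measurableSet_singleton true)
  -- independence of the events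
  have hiset : iIndepSet s P := by
    rw [iIndepSet_iff_meas_biInter hmeas]
    intro t
    have h := hindep.measure_inter_preimage_eq_mul (t.image ι)
      (sets := fun _ => ({true} : Set Bool)) (fun i _ => measurableSet_singleton true)
    rw [Finset.prod_image (fun a _ b _ hab => hι_inj hab)] at h
    rw [show (⋂ i ∈ t.image ι, (fun p : {p : Sym2 S // ¬ p.IsDiag} => X p.1) i ⁻¹' {true})
        = ⋂ n ∈ t, s n by
      simp only [Finset.set_biInter_finset_image]; rfl] at h
    exact h
  -- law of the events
  have hlaw : ∀ n, P (s n) = ENNReal.ofReal (1 - Real.exp (-(c x (e n) * t₀))) := by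
    intro n
    have := hX_law x (e n) (fun h => hne n h.symm)
    convert this using 2
    rfl
  -- divergence of the sum of probabilities
  have hsum : ∑' n, P (s n) = ⊤ := by
    by_contra hfin'
    apply hns
    -- the real series of probabilities is summable
    have hf : Summable (fun n => 1 - Real.exp (-(c x (e n) * t₀))) := by
      have := ENNReal.summable_toReal hfin'
      convert this using 1
      funext n
      rw [hlaw n, ENNReal.toReal_ofReal]
      have : Real.exp (-(c x (e n) * t₀)) ≤ 1 := by
        rw [← Real.exp_zero]
        exact Real.exp_le_exp.mpr (by simp [mul_nonneg (hc_nonneg x (e n)) ht₀.le])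
      linarith
    -- hence summability of `n ↦ c x (e n) * t₀`
    have hten : Tendsto (fun n => 1 - Real.exp (-(c x (e n) * t₀))) atTop (nhds 0) :=
      hf.tendsto_atTop_zero
    obtain ⟨N, hN⟩ := (hten.eventually (gt_mem_nhds (by norm_num : (0:ℝ) < 1/2))).exists_forall_of_atTop
    have hu : Summable (fun n => c x (e n) * t₀) := by
      rw [← summable_nat_add_iff N]
      apply Summable.of_nonneg_of_le
        (fun n => mul_nonneg (hc_nonneg x _) ht₀.le)
        (fun n => ?_)
        (((summable_nat_add_iff N).mpr hf).mul_left 2)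
      · have h1 := hN (n + N) (Nat.le_add_left N n)
        exact aux_ineq (mul_nonneg (hc_nonneg x _) ht₀.le) (by linarith)
    -- transfer back to a sum over `S`
    have hce : Summable (fun n => c x (e n)) := by
      have := hu.mul_right t₀⁻¹
      refine this.congr (fun n => ?_)
      exact mul_inv_cancel_right₀ ht₀.ne' _
    have hsub : Summable (fun y : ↥({x}ᶜ : Set S) => c x y) :=
      (e.summable_iff (f := fun y : ↥({x}ᶜ : Set S) => c x y)).mp hce
    exact ((Set.finite_singleton x).summable_compl_iff (f := fun y => c x y)).mp hsub
  -- Borel–Cantelli II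
  have h1 : P (limsup s atTop) = 1 := measure_limsup_eq_one hmeas hiset hsum
  have h2 : ∀ᵐ ω ∂P, ω ∈ limsup s atTop := by
    rw [ae_iff]
    have : {ω | ¬ ω ∈ limsup s atTop} = (limsup s atTop)ᶜ := rfl
    rw [this, prob_compl_eq_zero_iff (MeasurableSet.measurableSet_limsup hmeas)]
    exact h1
  obtain ⟨ω, hl, hfinω⟩ := (h2.and hfin).exists
  -- the component of x is infinite: contradiction
  have hfreq : ∃ᶠ n in atTop, ω ∈ s n := mem_limsup_iff_frequently_mem.mp hl
  have hI : {n : ℕ | ω ∈ s n}.Infinite := Nat.frequently_atTop_iff_infinite.mp hfreq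
  have hinj : Function.Injective (fun n : ℕ => (e n : S)) :=
    fun a b hab => e.injective (Subtype.ext hab)
  have himg : ((fun n => (e n : S)) '' {n : ℕ | ω ∈ s n}).Infinite :=
    hI.image hinj.injOn
  have hsubset : ((fun n => (e n : S)) '' {n : ℕ | ω ∈ s n}) ⊆
      {y : S | (SimpleGraph.fromRel (fun a b => X s(a, b) ω = true)).Reachable x y} := by
    rintro _ ⟨n, hn, rfl⟩
    have hadj : (SimpleGraph.fromRel (fun a b => X s(a, b) ω = true)).Adj x (e n) := by
      rw [SimpleGraph.fromRel_adj]
      exact ⟨fun h => hne n h.symm, Or.inl hn⟩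
    exact hadj.reachable
  exact (hfinω x).not_infinite (himg.mono hsubset)
end

section
/- Let (Ω, 𝓕, μ) be a probability space, T : Ω → Ω a measure-preserving map, and g : Ω → ℝ a measurable function with g(ω) > 0 for μ-almost every ω. Then for μ-almost every ω the partial sums ∑_{k=0}^{n−1} g(T^k ω) tend to +∞ as n → ∞. -/
open MeasureTheory Filter

/-- For a measure-preserving map `T` of a probability space and a measurable
function `g` which is almost everywhere strictly positive, the ergodic sums
`∑_{k<n} g(T^k ω)` tend to `+∞` for almost every `ω`. -/
theorem stmt_8 {Ω : Type*} [MeasurableSpace Ω] (μ : Measure Ω) [IsProbabilityMeasure μ]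
    (T : Ω → Ω) (hT : MeasurePreserving T μ μ)
    (g : Ω → ℝ) (hg_meas : Measurable g) (hg_pos : ∀ᵐ ω ∂μ, 0 < g ω) :
    ∀ᵐ ω ∂μ, Tendsto (fun n : ℕ => ∑ k ∈ Finset.range n, g (T^[k] ω)) atTop atTop := by
  have hcons : Conservative T μ := hT.conservative
  -- a.e., every point on the orbit has positive g
  have h1 : ∀ᵐ ω ∂μ, ∀ k : ℕ, 0 < g (T^[k] ω) := by
    rw [ae_all_iff]
    intro k
    exact (hT.iterate k).quasiMeasurePreserving.ae hg_pos
  -- a.e., recurrence to the sets {g > 1/(m+1)}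
  have h2 : ∀ᵐ ω ∂μ, ∀ m : ℕ, ω ∈ {x | 1 / (m + 1 : ℝ) < g x} →
      ∃ᶠ n in atTop, T^[n] ω ∈ {x | 1 / (m + 1 : ℝ) < g x} := by
    rw [ae_all_iff]
    intro m
    exact hcons.ae_mem_imp_frequently_image_mem
      ((measurableSet_lt measurable_const hg_meas).nullMeasurableSet)
  filter_upwards [h1, h2, hg_pos] with ω hpos hrec hω
  set S : ℕ → ℝ := fun n => ∑ k ∈ Finset.range n, g (T^[k] ω) with hS
  have hmono : Monotone S := by
    apply monotone_nat_of_le_succ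
    intro n
    rw [hS]
    simp only [Finset.sum_range_succ]
    linarith [hpos n]
  -- pick m with 1/(m+1) < g ω
  obtain ⟨m, hm⟩ := exists_nat_gt (1 / g ω)
  have hε : (0:ℝ) < 1 / (m + 1 : ℝ) := by positivity
  have hmem : ω ∈ {x | 1 / (m + 1 : ℝ) < g x} := by
    have h1m : 1 / g ω < (m : ℝ) + 1 := by linarith
    have h2m : 1 < ((m:ℝ) + 1) * g ω := (div_lt_iff₀ hω).mp h1m
    show 1 / ((m:ℝ) + 1) < g ω
    rw [div_lt_iff₀ (by positivity : (0:ℝ) < (m:ℝ) + 1), mul_comm]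
    exact h2m
  have hfreq := hrec m hmem
  rw [frequently_atTop] at hfreq
  -- claim: ∀ j, ∃ n, j * ε ≤ S n
  have key : ∀ j : ℕ, ∃ n, (j : ℝ) * (1 / (m + 1 : ℝ)) ≤ S n := by
    intro j
    induction j with
    | zero => exact ⟨0, by simp [hS]⟩
    | succ j ih =>
      obtain ⟨n, hn⟩ := ih
      obtain ⟨k, hkn, hk⟩ := hfreq n
      refine ⟨k + 1, ?_⟩
      have hSk : S n ≤ S k := hmono hkn
      have : S (k + 1) = S k + g (T^[k] ω) := by
        rw [hS]; simp [Finset.sum_range_succ]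
      rw [this]
      push_cast
      have : 1 / (m + 1 : ℝ) < g (T^[k] ω) := hk
      linarith
  refine tendsto_atTop_atTop_of_monotone hmono ?_
  intro b
  obtain ⟨j, hj⟩ := exists_nat_gt (b / (1 / (m + 1 : ℝ)))
  obtain ⟨n, hn⟩ := key j
  exact ⟨n, le_trans (le_of_lt ((div_lt_iff₀ hε).mp hj)) hn⟩
end

section
/- Let f, g, h : [0,∞) → ℕ be nondecreasing with f and g right-continuous. Assume every jump of f has size at most 1 (f(t) ≤ f(t−) + 1 for all t > 0) and that f − g is nondecreasing. Then the following are equivalent: (A) there exists t₁ ∈ (0,1] such that f(1) = f(t₁), f(t₁) = f(t₁−) + 1, g(t₁) = g(t₁−) + 1, and h(s) = h(0) for all s ∈ [0, t₁); (B) there exists n₀ ≥ 1 such that for every n ≥ n₀ there is k ∈ {1, …, 2ⁿ} with f(1) = f(k 2^{−n}), f(k 2^{−n}) = f((k−1) 2^{−n}) + 1, g(k 2^{−n}) = g((k−1) 2^{−n}) + 1, and h((k−1) 2^{−n}) = h(0). -/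
open Function Filter Topology Set

lemma discrete_left_aux (f : NNReal → ℕ) (hf : Monotone f) {t : NNReal} (ht : 0 < t) :
    ∃ a, a < t ∧ ∀ s, a < s → s < t → f s = leftLim f t := by
  have hne : (𝓝[<] t).NeBot := nhdsWithin_Iio_self_neBot' ⟨0, ht⟩
  have hev : ∀ᶠ s in 𝓝[<] t, f s = leftLim f t := by
    have h2 := hf.tendsto_leftLim t
    have h1 : {leftLim f t} ∈ 𝓝 (leftLim f t) := by simp [nhds_discrete]
    filter_upwards [h2 h1] with s hs using hs
  rw [(nhdsLT_basis_of_exists_lt ⟨0, ht⟩).eventually_iff] at hev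
  obtain ⟨a, ha, h⟩ := hev
  exact ⟨a, ha, fun s h1 h2 => h ⟨h1, h2⟩⟩

lemma discrete_right_aux (f : NNReal → ℕ) {t : NNReal} (hrc : ContinuousWithinAt f (Ici t) t) :
    ∃ ε : NNReal, 0 < ε ∧ ∀ s, t ≤ s → s < t + ε → f s = f t := by
  have hev : ∀ᶠ s in 𝓝[≥] t, f s = f t := by
    have h1 : {f t} ∈ 𝓝 (f t) := by simp [nhds_discrete]
    filter_upwards [hrc h1] with s hs using hs
  obtain ⟨b, hb, h⟩ := mem_nhdsGE_iff_exists_Ico_subset.1 hev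
  refine ⟨b - t, tsub_pos_of_lt hb, fun s h1 h2 => h ⟨h1, ?_⟩⟩
  calc s < t + (b - t) := h2
    _ = b := by rw [add_tsub_cancel_of_le hb.le]

lemma small_dyadic_aux {ε : NNReal} (h : 0 < ε) : ∃ m : ℕ, ((2:NNReal)^m)⁻¹ < ε := by
  have h2 : (2:NNReal)⁻¹ < 1 := by rw [inv_lt_one_iff₀]; right; norm_num
  obtain ⟨m, hm⟩ := NNReal.exists_pow_lt_of_lt_one h h2
  exact ⟨m, by rwa [inv_pow] at hm⟩

lemma dyadic_anti_aux {m n : ℕ} (h : m ≤ n) : ((2:NNReal)^n)⁻¹ ≤ ((2:NNReal)^m)⁻¹ := by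
  gcongr
  norm_num

/-- Dyadic characterization of a single joint jump: for nondecreasing
`f, g, h : [0,∞) → ℕ` with `f, g` right-continuous, all jumps of `f` of size at most 1, and
`f - g` nondecreasing, the existence of a time `t₁ ∈ (0,1]` with `f(1) = f(t₁)`,
`f(t₁) = f(t₁-) + 1`, `g(t₁) = g(t₁-) + 1` and `h` constant on `[0, t₁)` is equivalent to its
dyadic approximation (B). -/
theorem stmt_11 (f g h : NNReal → ℕ)
    (hf : Monotone f) (hg : Monotone g) (hh : Monotone h)
    (hf_rc : ∀ t, ContinuousWithinAt f (Ici t) t)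
    (hg_rc : ∀ t, ContinuousWithinAt g (Ici t) t)
    (hf_jump : ∀ t : NNReal, 0 < t → f t ≤ leftLim f t + 1)
    (hfg : Monotone (fun t => (f t : ℤ) - (g t : ℤ))) :
    (∃ t₁ : NNReal, 0 < t₁ ∧ t₁ ≤ 1 ∧ f 1 = f t₁ ∧
        f t₁ = leftLim f t₁ + 1 ∧ g t₁ = leftLim g t₁ + 1 ∧
        ∀ s, s < t₁ → h s = h 0)
    ↔ (∃ n₀ : ℕ, 1 ≤ n₀ ∧ ∀ n, n₀ ≤ n → ∃ k : ℕ, 1 ≤ k ∧ k ≤ 2 ^ n ∧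
        f 1 = f ((k : NNReal) * ((2 : NNReal) ^ n)⁻¹) ∧
        f ((k : NNReal) * ((2 : NNReal) ^ n)⁻¹)
          = f (((k - 1 : ℕ) : NNReal) * ((2 : NNReal) ^ n)⁻¹) + 1 ∧
        g ((k : NNReal) * ((2 : NNReal) ^ n)⁻¹)
          = g (((k - 1 : ℕ) : NNReal) * ((2 : NNReal) ^ n)⁻¹) + 1 ∧
        h (((k - 1 : ℕ) : NNReal) * ((2 : NNReal) ^ n)⁻¹) = h 0) := by
  constructor
  · -- (A) → (B)
    rintro ⟨t₁, ht0, ht1, hft, hfj, hgj, hhc⟩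
    obtain ⟨a, haf, hafc⟩ := discrete_left_aux f hf ht0
    obtain ⟨a', hag, hagc⟩ := discrete_left_aux g hg ht0
    obtain ⟨ε, hε, hgr⟩ := discrete_right_aux g (hg_rc t₁)
    have hA : max a a' < t₁ := max_lt haf hag
    obtain ⟨m, hm⟩ := small_dyadic_aux (lt_min_iff.2 ⟨tsub_pos_of_lt hA, hε⟩)
    have hm1 : ((2:NNReal)^m)⁻¹ < t₁ - max a a' := lt_of_lt_of_le hm (min_le_left _ _)
    have hm2 : ((2:NNReal)^m)⁻¹ < ε := lt_of_lt_of_le hm (min_le_right _ _)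
    have key : ∀ n, m ≤ n → ∃ k : ℕ, 1 ≤ k ∧ k ≤ 2 ^ n ∧
        f 1 = f ((k : NNReal) * ((2 : NNReal) ^ n)⁻¹) ∧
        f ((k : NNReal) * ((2 : NNReal) ^ n)⁻¹)
          = f (((k - 1 : ℕ) : NNReal) * ((2 : NNReal) ^ n)⁻¹) + 1 ∧
        g ((k : NNReal) * ((2 : NNReal) ^ n)⁻¹)
          = g (((k - 1 : ℕ) : NNReal) * ((2 : NNReal) ^ n)⁻¹) + 1 ∧
        h (((k - 1 : ℕ) : NNReal) * ((2 : NNReal) ^ n)⁻¹) = h 0 := by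
      intro n hn
      have hsmall : ((2:NNReal)^n)⁻¹ ≤ ((2:NNReal)^m)⁻¹ := dyadic_anti_aux hn
      set e := ((2:NNReal)^n)⁻¹ with he_def
      have he0 : 0 < e := by positivity
      have he1 : (2:NNReal)^n * e = 1 := mul_inv_cancel₀ (by positivity)
      set k := ⌈t₁ * (2:NNReal)^n⌉₊ with hk_def
      have hk1 : 1 ≤ k := Nat.one_le_ceil_iff.2 (by positivity)
      have hk2 : k ≤ 2 ^ n := by
        rw [Nat.ceil_le]
        calc t₁ * (2:NNReal)^n ≤ 1 * (2:NNReal)^n := mul_le_mul_left ht1 _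
          _ = ((2^n : ℕ) : NNReal) := by push_cast; rw [one_mul]
      refine ⟨k, hk1, hk2, ?_⟩
      set b := (k : NNReal) * e with hb_def
      set a₁ := ((k - 1 : ℕ) : NNReal) * e with ha_def
      have hab : a₁ + e = b := by
        rw [ha_def, hb_def]
        have : ((k - 1 : ℕ) : NNReal) + 1 = (k : NNReal) := by
          exact_mod_cast congrArg (Nat.cast (R := NNReal)) (Nat.sub_add_cancel hk1)
        calc ((k - 1 : ℕ) : NNReal) * e + e = (((k - 1 : ℕ) : NNReal) + 1) * e := by ring
          _ = (k : NNReal) * e := by rw [this]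
      have htb : t₁ ≤ b := by
        calc t₁ = t₁ * ((2:NNReal)^n * e) := by rw [he1, mul_one]
          _ = t₁ * (2:NNReal)^n * e := (mul_assoc _ _ _).symm
          _ ≤ (k : NNReal) * e := mul_le_mul_left (Nat.le_ceil _) e
      have hb1 : b ≤ 1 := by
        calc b ≤ ((2^n : ℕ) : NNReal) * e := mul_le_mul_left (by exact_mod_cast hk2) e
          _ = 1 := by push_cast; exact he1
      have hat : a₁ < t₁ := by
        have h1 : (k : NNReal) < t₁ * (2:NNReal)^n + 1 := Nat.ceil_lt_add_one zero_le
        have h2 : b < t₁ + e := by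
          calc b < (t₁ * (2:NNReal)^n + 1) * e := mul_lt_mul_of_pos_right h1 he0
            _ = t₁ + e := by rw [add_mul, one_mul, mul_assoc, he1, mul_one]
        have h3 : a₁ + e < t₁ + e := hab ▸ h2
        exact lt_of_add_lt_add_right h3
      have hAa : max a a' < a₁ := by
        have h2 : max a a' + e < t₁ :=
          lt_tsub_iff_left.1 (lt_of_le_of_lt hsmall hm1)
        have h3 : max a a' + e < a₁ + e := lt_of_lt_of_le h2 (hab ▸ htb)
        exact lt_of_add_lt_add_right h3
      have hfb : f b = f t₁ := le_antisymm (hft ▸ hf hb1) (hf htb)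
      have hfa : f a₁ = leftLim f t₁ :=
        hafc a₁ (lt_of_le_of_lt (le_max_left a a') hAa) hat
      have hga : g a₁ = leftLim g t₁ :=
        hagc a₁ (lt_of_le_of_lt (le_max_right a a') hAa) hat
      have hgb : g b = g t₁ := by
        refine hgr b htb ?_
        calc b = a₁ + e := hab.symm
          _ < t₁ + e := add_lt_add_left hat e
          _ ≤ t₁ + ε := add_le_add_right (le_of_lt (lt_of_le_of_lt hsmall hm2)) t₁
      refine ⟨?_, ?_, ?_, hhc a₁ hat⟩
      · rw [hfb]; exact hft
      · rw [hfb, hfa]; exact hfj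
      · rw [hgb, hga]; exact hgj
    exact ⟨max m 1, le_max_right _ _, fun n hn => key n (le_trans (le_max_left _ _) hn)⟩
  · -- (B) → (A)
    rintro ⟨n₀, hn₀, hB⟩
    set S := {t : NNReal | f 1 ≤ f t} with hS_def
    have h1S : (1:NNReal) ∈ S := by
      simp only [hS_def, Set.mem_setOf_eq, le_refl]
    have hSne : S.Nonempty := ⟨1, h1S⟩
    set t₁ := sInf S with ht₁_def
    have ht₁1 : t₁ ≤ 1 := csInf_le (OrderBot.bddBelow S) h1S
    have hmem : f 1 ≤ f t₁ := by
      obtain ⟨ε, hε, hfr⟩ := discrete_right_aux f (hf_rc t₁)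
      obtain ⟨s, hsS, hs⟩ := exists_lt_of_csInf_lt hSne (lt_add_of_pos_right t₁ hε)
      have h1 : f s = f t₁ := hfr s (csInf_le (OrderBot.bddBelow S) hsS) hs
      exact h1 ▸ hsS
    have hft : f t₁ = f 1 := le_antisymm (hf ht₁1) hmem
    have hlt : ∀ s, s < t₁ → f s < f 1 := by
      intro s hs
      by_contra hcon
      push_neg at hcon
      exact absurd (csInf_le (OrderBot.bddBelow S) hcon) (not_le.2 hs)
    -- per-level facts
    have key : ∀ n, n₀ ≤ n → ∃ aa bb : NNReal, aa < t₁ ∧ t₁ ≤ bb ∧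
        aa + ((2:NNReal)^n)⁻¹ = bb ∧
        g bb = g aa + 1 ∧ h aa = h 0 ∧
        (∀ s, t₁ ≤ s → s ≤ bb → g s = g bb) ∧
        (∀ s, aa ≤ s → s < t₁ → g s = g aa) := by
      intro n hn
      obtain ⟨k, hk1, hk2, H1, H2, H3, H4⟩ := hB n hn
      set e := ((2:NNReal)^n)⁻¹ with he_def
      have he1 : (2:NNReal)^n * e = 1 := mul_inv_cancel₀ (by positivity)
      set b := (k : NNReal) * e with hb_def
      set a₁ := ((k - 1 : ℕ) : NNReal) * e with ha_def
      have hab : a₁ + e = b := by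
        rw [ha_def, hb_def]
        have hcast : ((k - 1 : ℕ) : NNReal) + 1 = (k : NNReal) := by
          exact_mod_cast congrArg (Nat.cast (R := NNReal)) (Nat.sub_add_cancel hk1)
        calc ((k - 1 : ℕ) : NNReal) * e + e = (((k - 1 : ℕ) : NNReal) + 1) * e := by ring
          _ = (k : NNReal) * e := by rw [hcast]
      have hb1 : b ≤ 1 := by
        calc b ≤ ((2^n : ℕ) : NNReal) * e := mul_le_mul_left (by exact_mod_cast hk2) e
          _ = 1 := by push_cast; exact he1
      have hfb : f b = f 1 := H1.symm
      have hbS : b ∈ S := le_of_eq hfb.symm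
      have htb : t₁ ≤ b := csInf_le (OrderBot.bddBelow S) hbS
      have hfa : f a₁ + 1 = f 1 := by rw [← H2, hfb]
      have hat : a₁ < t₁ := by
        by_contra hcon
        push_neg at hcon
        have := hf hcon
        rw [hft] at this
        omega
      have hgsr : ∀ s, t₁ ≤ s → s ≤ b → g s = g b := by
        intro s hs1 hs2
        have hfs : f s = f b := by
          have h1 : f s ≤ f 1 := hf (le_trans hs2 hb1)
          have h2 : f 1 ≤ f s := by
            calc f 1 = f t₁ := hft.symm
              _ ≤ f s := hf hs1
          omega
        have hmo := hfg hs2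
        simp only at hmo
        have hgs := hg hs2
        omega
      have hgsl : ∀ s, a₁ ≤ s → s < t₁ → g s = g a₁ := by
        intro s hs1 hs2
        have hfs : f s = f a₁ := by
          have h1 := hf hs1
          have h2 := hlt s hs2
          omega
        have hmo := hfg hs1
        simp only at hmo
        have hgs := hg hs1
        omega
      exact ⟨a₁, b, hat, htb, hab, H3, H4, hgsr, hgsl⟩
    obtain ⟨a0, b0, ha0, hb0, hab0, hg0, hh0, hgr0, hgl0⟩ := key n₀ le_rfl
    have ht0 : 0 < t₁ := lt_of_le_of_lt (zero_le : 0 ≤ a0) ha0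
    refine ⟨t₁, ht0, ht₁1, hft.symm, ?_, ?_, ?_⟩
    · -- f jump
      obtain ⟨c, hc, hcc⟩ := discrete_left_aux f hf ht0
      obtain ⟨s, hs1, hs2⟩ := exists_between hc
      have h1 : leftLim f t₁ = f s := (hcc s hs1 hs2).symm
      have h2 : f s < f 1 := hlt s hs2
      have h3 := hf_jump t₁ ht0
      rw [hft] at h3 ⊢
      omega
    · -- g jump
      obtain ⟨c', hc', hcc'⟩ := discrete_left_aux g hg ht0
      obtain ⟨s, hs1, hs2⟩ := exists_between (max_lt hc' ha0)
      have h1 : leftLim g t₁ = g s :=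
        (hcc' s (lt_of_le_of_lt (le_max_left _ _) hs1) hs2).symm
      have h2 : g s = g a0 :=
        hgl0 s (le_of_lt (lt_of_le_of_lt (le_max_right _ _) hs1)) hs2
      have h3 : g t₁ = g b0 := hgr0 t₁ le_rfl hb0
      rw [h1, h2, h3, hg0]
    · -- h constant
      intro s hs
      obtain ⟨m, hm⟩ := small_dyadic_aux (tsub_pos_of_lt hs)
      obtain ⟨aa, bb, haa, hbb, habb, _, hha, _, _⟩ := key (max m n₀) (le_max_right _ _)
      have hsmall : ((2:NNReal)^(max m n₀))⁻¹ ≤ ((2:NNReal)^m)⁻¹ :=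
        dyadic_anti_aux (le_max_left _ _)
      have h1 : s + ((2:NNReal)^(max m n₀))⁻¹ < t₁ :=
        lt_tsub_iff_left.1 (lt_of_le_of_lt hsmall hm)
      have h2 : s < aa := by
        have h3 : s + ((2:NNReal)^(max m n₀))⁻¹ < aa + ((2:NNReal)^(max m n₀))⁻¹ :=
          lt_of_lt_of_le h1 (habb ▸ hbb)
        exact lt_of_add_lt_add_right h3
      have h4 := hh h2.le
      have h5 := hh (zero_le : 0 ≤ s)
      omega
end

section
/- Let S be a countably infinite set and (Ω, 𝓕) a measurable space. For each unordered pair {x,y} of distinct points of S let X_{x,y} : Ω → {0,1} be a measurable map. Then the set of ω ∈ Ω such that every connected component of the simple graph on S with edge set {{x,y} : x ≠ y, X_{x,y}(ω) = 1} is finite, is measurable (belongs to 𝓕). -/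
/-- Measurability of the event that all connected components of the random
graph with edge indicators `X_{x,y}` are finite. -/
theorem stmt_12 {S : Type*} [Countable S] [Infinite S]
    {Ω : Type*} [MeasurableSpace Ω]
    (X : S → S → Ω → Bool)
    (hX_symm : ∀ x y, X x y = X y x)
    (hX_meas : ∀ x y : S, x ≠ y → Measurable (X x y)) :
    MeasurableSet {ω : Ω | ∀ x : S,
      {y : S | (SimpleGraph.fromRel (fun a b => X a b ω = true)).Reachable x y}.Finite} := by
  have hrel : ∀ (ω : Ω) (a b : S),
      (SimpleGraph.fromRel (fun a b => X a b ω = true)).Adj a b ↔ (a ≠ b ∧ X a b ω = true) := by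
    intro ω a b
    rw [SimpleGraph.fromRel_adj]
    constructor
    · rintro ⟨hne, h | h⟩
      · exact ⟨hne, h⟩
      · exact ⟨hne, by rw [hX_symm]; exact h⟩
    · rintro ⟨hne, h⟩
      exact ⟨hne, Or.inl h⟩
  have hedge : ∀ a b : S, MeasurableSet {ω : Ω | a ≠ b ∧ X a b ω = true} := by
    intro a b
    by_cases h : a = b
    · simp [h]
    · have hm : MeasurableSet (X a b ⁻¹' {true}) :=
        (hX_meas a b h) (measurableSet_singleton true)
      have : {ω : Ω | a ≠ b ∧ X a b ω = true} = X a b ⁻¹' {true} := by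
        ext ω; simp [h]
      rw [this]; exact hm
  have hchain : ∀ (l : List S) (x : S),
      MeasurableSet {ω : Ω | List.Chain (fun a b => a ≠ b ∧ X a b ω = true) x l} := by
    intro l
    induction l with
    | nil => intro x; simp [List.Chain]
    | cons b l ih =>
        intro x
        have heq : {ω : Ω | List.Chain (fun a b => a ≠ b ∧ X a b ω = true) x (b :: l)}
            = {ω : Ω | x ≠ b ∧ X x b ω = true} ∩
              {ω : Ω | List.Chain (fun a b => a ≠ b ∧ X a b ω = true) b l} := by
          ext ω; simp [List.Chain, List.isChain_cons_cons]
        rw [heq]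
        exact (hedge x b).inter (ih b)
  have hreach : ∀ x y : S,
      MeasurableSet {ω : Ω | (SimpleGraph.fromRel (fun a b => X a b ω = true)).Reachable x y} := by
    intro x y
    have heq : {ω : Ω | (SimpleGraph.fromRel (fun a b => X a b ω = true)).Reachable x y}
        = ⋃ (l : List S), {ω : Ω | List.Chain (fun a b => a ≠ b ∧ X a b ω = true) x l ∧
            List.getLast (x :: l) (by simp) = y} := by
      ext ω
      simp only [Set.mem_setOf_eq, Set.mem_iUnion]
      constructor
      · intro h
        have h' := (SimpleGraph.reachable_iff_reflTransGen _ _).mp h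
        obtain ⟨l, hc, hl⟩ := List.exists_isChain_cons_of_relationReflTransGen h'
        exact ⟨l, hc.imp (fun ⦃a b⦄ hab => (hrel ω a b).mp hab), hl⟩
      · rintro ⟨l, hc, hl⟩
        refine (SimpleGraph.reachable_iff_reflTransGen _ _).mpr ?_
        exact List.relationReflTransGen_of_exists_isChain_cons l
          (List.IsChain.imp (fun ⦃a b⦄ h => (hrel ω a b).mpr h) hc) hl
    rw [heq]
    refine MeasurableSet.iUnion fun l => ?_
    by_cases hy : List.getLast (x :: l) (by simp) = y
    · simpa [hy] using hchain l x
    · simp [hy]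
  have hmain : ∀ x : S, MeasurableSet {ω : Ω |
      {y : S | (SimpleGraph.fromRel (fun a b => X a b ω = true)).Reachable x y}.Finite} := by
    intro x
    have heq : {ω : Ω |
        {y : S | (SimpleGraph.fromRel (fun a b => X a b ω = true)).Reachable x y}.Finite}
        = ⋃ (F : Finset S), ⋂ (y : S),
            {ω : Ω | (SimpleGraph.fromRel (fun a b => X a b ω = true)).Reachable x y → y ∈ F} := by
      ext ω
      simp only [Set.mem_setOf_eq, Set.mem_iUnion, Set.mem_iInter]
      constructor
      · intro h
        exact ⟨h.toFinset, fun y hy => h.mem_toFinset.mpr hy⟩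
      · rintro ⟨F, hF⟩
        exact F.finite_toSet.subset (fun y hy => hF y hy)
    rw [heq]
    refine MeasurableSet.iUnion fun F => MeasurableSet.iInter fun y => ?_
    by_cases hy : y ∈ F
    · simp [hy]
    · have : {ω : Ω | (SimpleGraph.fromRel (fun a b => X a b ω = true)).Reachable x y → y ∈ F}
          = {ω : Ω | (SimpleGraph.fromRel (fun a b => X a b ω = true)).Reachable x y}ᶜ := by
        ext ω; simp [hy]
      rw [this]
      exact (hreach x y).compl
  have : {ω : Ω | ∀ x : S,
      {y : S | (SimpleGraph.fromRel (fun a b => X a b ω = true)).Reachable x y}.Finite}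
      = ⋂ x : S, {ω : Ω |
      {y : S | (SimpleGraph.fromRel (fun a b => X a b ω = true)).Reachable x y}.Finite} := by
    ext ω; simp
  rw [this]
  exact MeasurableSet.iInter hmain
end

section
/- Let (N_i)_{i∈ℕ} be an independent family of ℕ-valued random variables on a probability space (Ω, P), where each N_i is Poisson distributed with parameter λ_i ≥ 0 and Λ := ∑_{i} λ_i < ∞. Then almost surely ∑_i N_i < ∞ (only finitely many N_i are nonzero), and the random variable M := ∑_i N_i is Poisson distributed with parameter Λ. -/
open MeasureTheory ProbabilityTheory Finset Filter

noncomputable def pois (l : ℝ) (j : ℕ) : ℝ := Real.exp (-l) * l ^ j / j.factorial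

lemma pois_nonneg {l : ℝ} (hl : 0 ≤ l) (j : ℕ) : 0 ≤ pois l j := by
  unfold pois; positivity

lemma pois_conv (μ l : ℝ) (j : ℕ) :
    ∑ k ∈ range (j+1), pois μ k * pois l (j-k) = pois (μ+l) j := by
  unfold pois
  have hj : (j.factorial : ℝ) ≠ 0 := Nat.cast_ne_zero.2 j.factorial_ne_zero
  rw [add_pow, Finset.mul_sum, Finset.sum_div]
  refine Finset.sum_congr rfl fun k hk => ?_
  have hkj : k ≤ j := Nat.lt_succ_iff.mp (Finset.mem_range.mp hk)
  have hfacts : ((k.factorial : ℝ) * (j-k).factorial) * (j.choose k) = j.factorial := by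
    rw_mod_cast [← Nat.choose_mul_factorial_mul_factorial hkj]; ring
  have hk0 : (k.factorial : ℝ) ≠ 0 := Nat.cast_ne_zero.2 k.factorial_ne_zero
  have hk1 : ((j-k).factorial : ℝ) ≠ 0 := Nat.cast_ne_zero.2 (j-k).factorial_ne_zero
  rw [neg_add, Real.exp_add]
  field_simp
  rw [← hfacts]
  ring

lemma indep_add_poisson {Ω : Type*} [MeasurableSpace Ω] (P : Measure Ω) [IsProbabilityMeasure P]
    (X Y : Ω → ℕ) (hX : Measurable X) (hY : Measurable Y) (μ l : ℝ)
    (hμ : 0 ≤ μ) (hl : 0 ≤ l)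
    (hXp : ∀ j, P {ω | X ω = j} = ENNReal.ofReal (pois μ j))
    (hYp : ∀ j, P {ω | Y ω = j} = ENNReal.ofReal (pois l j))
    (hInd : IndepFun X Y P) (j : ℕ) :
    P {ω | X ω + Y ω = j} = ENNReal.ofReal (pois (μ + l) j) := by
  have hset : {ω | X ω + Y ω = j} = ⋃ k ∈ range (j+1), ({ω | X ω = k} ∩ {ω | Y ω = j - k}) := by
    ext ω
    simp only [Set.mem_setOf_eq, Set.mem_iUnion, Set.mem_inter_iff, mem_range, Nat.lt_succ_iff]
    constructor
    · rintro h; exact ⟨X ω, by omega, rfl, by omega⟩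
    · rintro ⟨k, hk, h1, h2⟩; omega
  rw [hset, measure_biUnion_finset]
  · have hterm : ∀ k ∈ range (j+1), P ({ω | X ω = k} ∩ {ω | Y ω = j - k})
        = ENNReal.ofReal (pois μ k * pois l (j-k)) := by
      intro k _
      have h0 : {ω | X ω = k} ∩ {ω | Y ω = j - k} = X ⁻¹' {k} ∩ Y ⁻¹' {j - k} := rfl
      rw [h0, hInd.measure_inter_preimage_eq_mul _ _ (measurableSet_singleton k)
        (measurableSet_singleton (j - k))]
      have e1 : X ⁻¹' {k} = {ω | X ω = k} := rfl
      have e2 : Y ⁻¹' {j-k} = {ω | Y ω = j-k} := rfl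
      rw [e1, e2, hXp, hYp, ← ENNReal.ofReal_mul (pois_nonneg hμ k)]
    rw [Finset.sum_congr rfl hterm, ← ENNReal.ofReal_sum_of_nonneg (fun k _ =>
      mul_nonneg (pois_nonneg hμ k) (pois_nonneg hl _)), pois_conv]
  · intro a _ b _ hab
    simp only [Function.onFun, Set.disjoint_left]
    rintro ω ⟨h1, _⟩ ⟨h2, _⟩
    exact hab (h1.symm.trans h2)
  · intro k _
    exact ((hX (measurableSet_singleton k)).inter (hY (measurableSet_singleton (j-k))))

lemma cdf_of_pmf {Ω : Type*} [MeasurableSpace Ω] (P : Measure Ω)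
    (X : Ω → ℕ) (hX : Measurable X) (μ : ℝ) (hμ : 0 ≤ μ)
    (h : ∀ k, P {ω | X ω = k} = ENNReal.ofReal (pois μ k)) (j : ℕ) :
    P {ω | X ω ≤ j} = ENNReal.ofReal (∑ k ∈ range (j+1), pois μ k) := by
  have hset : {ω | X ω ≤ j} = ⋃ k ∈ range (j+1), {ω | X ω = k} := by
    ext ω
    simp only [Set.mem_setOf_eq, Set.mem_iUnion, mem_range, Nat.lt_succ_iff]
    exact ⟨fun hh => ⟨X ω, hh, rfl⟩, fun ⟨k, hk, he⟩ => he ▸ hk⟩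
  rw [hset, measure_biUnion_finset]
  · rw [Finset.sum_congr rfl (fun k _ => h k),
      ← ENNReal.ofReal_sum_of_nonneg (fun k _ => pois_nonneg hμ k)]
  · intro a _ b _ hab
    simp only [Function.onFun, Set.disjoint_left]
    rintro ω h1 h2
    exact hab (h1.symm.trans h2)
  · exact fun k _ => hX (measurableSet_singleton k)

lemma partial_poisson {Ω : Type*} [MeasurableSpace Ω] (P : Measure Ω) [IsProbabilityMeasure P]
    (N : ℕ → Ω → ℕ) (hN_meas : ∀ i, Measurable (N i))
    (lam : ℕ → ℝ) (hlam : ∀ i, 0 ≤ lam i)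
    (hpoisson : ∀ i (j : ℕ), P {ω | N i ω = j} = ENNReal.ofReal (pois (lam i) j))
    (hindep : iIndepFun N P) (n : ℕ) :
    ∀ j, P {ω | (∑ i ∈ range n, N i ω) = j}
      = ENNReal.ofReal (pois (∑ i ∈ range n, lam i) j) := by
  induction n with
  | zero =>
    intro j
    simp only [range_zero, Finset.sum_empty]
    cases j with
    | zero => simp [pois, Set.setOf_true]
    | succ j => simp [pois, Set.setOf_false]
  | succ n ih =>
    intro j
    have hXm : Measurable (fun ω => ∑ i ∈ range n, N i ω) :=
      Finset.measurable_sum _ (fun i _ => hN_meas i)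
    have hInd : IndepFun (fun ω => ∑ i ∈ range n, N i ω) (N n) P := by
      have := hindep.indepFun_finsetSum_of_notMem hN_meas (Finset.notMem_range_self (n := n))
      convert this using 1
      ext ω
      simp [Finset.sum_apply]
    have := indep_add_poisson P (fun ω => ∑ i ∈ range n, N i ω) (N n) hXm (hN_meas n)
      (∑ i ∈ range n, lam i) (lam n) (Finset.sum_nonneg fun i _ => hlam i) (hlam n)
      ih (hpoisson n) hInd j
    simpa [Finset.sum_range_succ] using this

/-- Superposition of independent Poisson random variables: if `N_i` are
independent Poisson with parameters `λ_i ≥ 0` and `Λ = ∑_i λ_i < ∞`, then almost surely only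
finitely many `N_i` are nonzero, and `M = ∑_i N_i` is Poisson with parameter `Λ`. -/
theorem stmt_18 {Ω : Type*} [MeasurableSpace Ω] (P : Measure Ω) [IsProbabilityMeasure P]
    (N : ℕ → Ω → ℕ) (hN_meas : ∀ i, Measurable (N i))
    (lam : ℕ → ℝ) (hlam : ∀ i, 0 ≤ lam i) (hlam_sum : Summable lam)
    (hpoisson : ∀ i (j : ℕ), P {ω | N i ω = j}
      = ENNReal.ofReal (Real.exp (-lam i) * lam i ^ j / (Nat.factorial j)))
    (hindep : iIndepFun N P) :
    (∀ᵐ ω ∂P, {i : ℕ | N i ω ≠ 0}.Finite) ∧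
    ∀ j : ℕ, P {ω | (∑ᶠ i, N i ω) = j}
      = ENNReal.ofReal (Real.exp (-(∑' i, lam i)) * (∑' i, lam i) ^ j / (Nat.factorial j)) := by
  have hpois : ∀ i (j : ℕ), P {ω | N i ω = j} = ENNReal.ofReal (pois (lam i) j) := hpoisson
  set Λ : ℝ := ∑' i, lam i with hΛdef
  have hΛ0 : 0 ≤ Λ := tsum_nonneg hlam
  -- Part 1: Borel-Cantelli
  have hbound : ∀ i, P {ω | N i ω ≠ 0} ≤ ENNReal.ofReal (lam i) := by
    intro i
    have hm : MeasurableSet {ω | N i ω = (0:ℕ)} := hN_meas i (measurableSet_singleton 0)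
    have hc : {ω | N i ω ≠ 0} = {ω | N i ω = 0}ᶜ := rfl
    rw [hc, measure_compl hm (measure_ne_top P _), hpois i 0, measure_univ]
    have hp0 : pois (lam i) 0 = Real.exp (-lam i) := by simp [pois]
    rw [hp0, tsub_le_iff_right, ← ENNReal.ofReal_add (hlam i) (Real.exp_nonneg _)]
    rw [show (1:ENNReal) = ENNReal.ofReal 1 by simp]
    apply ENNReal.ofReal_le_ofReal
    have := Real.add_one_le_exp (-lam i)
    linarith
  have htsum : (∑' i, P {ω | N i ω ≠ 0}) ≠ ⊤ := by
    refine ne_top_of_le_ne_top ?_ (ENNReal.tsum_le_tsum hbound)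
    rw [← ENNReal.ofReal_tsum_of_nonneg hlam hlam_sum]
    exact ENNReal.ofReal_ne_top
  have hfin : ∀ᵐ ω ∂P, {i : ℕ | N i ω ≠ 0}.Finite := by
    filter_upwards [ae_eventually_notMem htsum] with ω hω
    obtain ⟨n, hn⟩ := eventually_atTop.mp hω
    refine (Set.finite_Iio n).subset fun i hi => ?_
    by_contra h
    exact (hn i (not_lt.mp h)) hi
  refine ⟨hfin, ?_⟩
  -- Part 2
  have hS : ∀ n j, P {ω | (∑ i ∈ range n, N i ω) = j}
      = ENNReal.ofReal (pois (∑ i ∈ range n, lam i) j) :=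
    partial_poisson P N hN_meas lam hlam hpois hindep
  set T : ℕ → ℕ → Set Ω := fun j n => {ω | (∑ i ∈ range n, N i ω) ≤ j} with hTdef
  have hTmeas : ∀ j n, MeasurableSet (T j n) := by
    intro j n
    have hm : Measurable (fun ω => ∑ i ∈ range n, N i ω) :=
      Finset.measurable_sum _ (fun i _ => hN_meas i)
    exact hm measurableSet_Iic
  have hTanti : ∀ j, Antitone (T j) := by
    intro j n m hnm ω hω
    have h1 : ∑ i ∈ range n, N i ω ≤ ∑ i ∈ range m, N i ω :=
      Finset.sum_le_sum_of_subset (Finset.range_subset_range.2 hnm)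
    show ∑ i ∈ range n, N i ω ≤ j
    exact le_trans h1 hω
  have hTcdf : ∀ j n, P (T j n) = ENNReal.ofReal (∑ k ∈ range (j+1), pois (∑ i ∈ range n, lam i) k) :=
    fun j n => cdf_of_pmf P _ (Finset.measurable_sum _ (fun i _ => hN_meas i))
      _ (Finset.sum_nonneg fun i _ => hlam i) (hS n) j
  set s : ℕ → Set Ω := fun j => ⋂ n, T j n with hsdef
  have hsmeas : ∀ j, MeasurableSet (s j) := fun j => MeasurableSet.iInter (hTmeas j)
  have hsP : ∀ j, P (s j) = ENNReal.ofReal (∑ k ∈ range (j+1), pois Λ k) := by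
    intro j
    have h1 : Tendsto (P ∘ (T j)) atTop (nhds (P (s j))) :=
      tendsto_measure_iInter_atTop (fun n => (hTmeas j n).nullMeasurableSet) (hTanti j)
        ⟨0, measure_ne_top P _⟩
    have hcont : Continuous fun l : ℝ => ENNReal.ofReal (∑ k ∈ range (j+1), pois l k) := by
      refine ENNReal.continuous_ofReal.comp (continuous_finset_sum _ fun k _ => ?_)
      unfold pois
      exact ((Real.continuous_exp.comp continuous_neg).mul (continuous_pow k)).div_const _
    have hΛn : Tendsto (fun n => ∑ i ∈ range n, lam i) atTop (nhds Λ) :=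
      hlam_sum.hasSum.tendsto_sum_nat
    have h2 : Tendsto (P ∘ (T j)) atTop (nhds (ENNReal.ofReal (∑ k ∈ range (j+1), pois Λ k))) := by
      have := (hcont.tendsto Λ).comp hΛn
      refine this.congr fun n => ?_
      simp only [Function.comp_apply]
      exact (hTcdf j n).symm
    exact tendsto_nhds_unique h1 h2
  -- identify {M = j} with s-sets almost everywhere
  have hkey : ∀ᵐ ω ∂P, ∀ j : ℕ, ((∑ᶠ i, N i ω) ≤ j ↔ ω ∈ s j) := by
    filter_upwards [hfin] with ω hω j
    obtain ⟨b, hb⟩ := hω.bddAbove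
    have hsupp : Function.support (fun i => N i ω) ⊆ ↑(range (b+1)) := by
      intro i hi
      simp only [coe_range, Set.mem_Iio]
      exact Nat.lt_succ_of_le (hb hi)
    have hMeq : (∑ᶠ i, N i ω) = ∑ i ∈ range (b+1), N i ω :=
      finsum_eq_finset_sum_of_support_subset _ hsupp
    constructor
    · intro hM
      refine Set.mem_iInter.mpr fun n => ?_
      have hle : ∑ i ∈ range n, N i ω ≤ ∑ i ∈ range (max n (b+1)), N i ω :=
        Finset.sum_le_sum_of_subset (Finset.range_subset_range.2 (le_max_left _ _))
      have heq2 : (∑ᶠ i, N i ω) = ∑ i ∈ range (max n (b+1)), N i ω :=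
        finsum_eq_finset_sum_of_support_subset _ (hsupp.trans (by
          simp only [coe_range]
          exact Set.Iio_subset_Iio (le_max_right _ _)))
      have : ∑ i ∈ range n, N i ω ≤ j := by omega
      exact this
    · intro hs
      have := Set.mem_iInter.mp hs (b+1)
      rw [hMeq]
      exact this
  intro j
  have hFnonneg : ∀ m : ℕ, 0 ≤ ∑ k ∈ range (m+1), pois Λ k :=
    fun m => Finset.sum_nonneg fun k _ => pois_nonneg hΛ0 k
  cases j with
  | zero =>
    have hae : {ω | (∑ᶠ i, N i ω) = 0} =ᵐ[P] s 0 := by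
      rw [eventuallyEq_set]
      filter_upwards [hkey] with ω hω
      simp only [Set.mem_setOf_eq, ← hω 0]
      omega
    rw [measure_congr hae, hsP 0]
    simp [pois]
  | succ j =>
    have hae : {ω | (∑ᶠ i, N i ω) = j+1} =ᵐ[P] (s (j+1) \ s j : Set Ω) := by
      rw [eventuallyEq_set]
      filter_upwards [hkey] with ω hω
      constructor
      · intro h
        have hmem : (∑ᶠ i, N i ω) = j+1 := h
        refine ⟨(hω (j+1)).mp (by omega), fun hc => ?_⟩
        have := (hω j).mpr hc
        omega
      · rintro ⟨h1, h2⟩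
        have ha : (∑ᶠ i, N i ω) ≤ j+1 := (hω (j+1)).mpr h1
        have hb : ¬ (∑ᶠ i, N i ω) ≤ j := fun hc => h2 ((hω j).mp hc)
        show (∑ᶠ i, N i ω) = j+1
        omega
    have hsub : s j ⊆ s (j+1) := by
      intro ω hω
      refine Set.mem_iInter.mpr fun n => ?_
      have h1 : ∑ i ∈ range n, N i ω ≤ j := Set.mem_iInter.mp hω n
      show ∑ i ∈ range n, N i ω ≤ j + 1
      omega
    rw [measure_congr hae, measure_diff hsub (hsmeas j).nullMeasurableSet (measure_ne_top P _),
      hsP j, hsP (j+1), ← ENNReal.ofReal_sub _ (hFnonneg j)]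
    have : ∑ k ∈ range (j+1+1), pois Λ k - ∑ k ∈ range (j+1), pois Λ k = pois Λ (j+1) := by
      rw [Finset.sum_range_succ]; ring
    rw [this]
    rfl
end
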